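/- Let n > 1 and suppose a power series f(x) = x + Σ_{i≥2} a_i x^i over a ℚ-algebra has compositional inverse g(x) = Σ_{i≥1} b_i x^i. If the only nonzero coefficients a_i for i ≥ 2 are a_N and a_M with 2 ≤ N < M, then b_n = 0 unless n - 1 can be written as c(N-1) + c'(M-1) with nonnegative integers c, c', in which case b_n is given by the Lagrange inversion formula b_n = (1/n) Σ_{c(N-1)+c'(M-1)=n-1} (-1)^{c+c'} · (n(n+1)⋯(n-1+c+c'))/(c! c'!) · a_N^c a_M^{c'}. -/

import Mathlib

open PowerSeries

/-- Composition `g ∘ f` of power series, valid when `f` has zero constant term. -/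
noncomputable def psComp {R : Type*} [CommRing R] (g f : PowerSeries R) : PowerSeries R :=
  PowerSeries.mk fun k =>
    ∑ n ∈ Finset.range (k + 1), PowerSeries.coeff n g * PowerSeries.coeff k (f ^ n)

section Aux

variable {R : Type*} [CommRing R]

lemma aux_coeff_X_pow_mul_of_lt (h : R⟦X⟧) {i j : ℕ} (hij : j < i) :
    coeff j (X ^ i * h) = 0 := by
  have : (X : R⟦X⟧) ^ i ∣ X ^ i * h := Dvd.intro h rfl
  exact (X_pow_dvd_iff.mp this) j hij

lemma aux_cancel {R : Type*} [CommRing R] [Algebra ℚ R] {k : ℕ} (hk : 0 < k) {x y : R}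
    (h : (k : R) * x = y) : x = algebraMap ℚ R (1 / k) * y := by
  have h1 : algebraMap ℚ R (1 / k) * (k : R) = 1 := by
    rw [← map_natCast (algebraMap ℚ R) k, ← map_mul]
    rw [one_div, inv_mul_cancel₀ (by exact_mod_cast hk.ne')]
    simp
  rw [← h, ← mul_assoc, h1, one_mul]

lemma aux_coeff_natCast_mul (k n : ℕ) (h : R⟦X⟧) :
    coeff n (((k : ℕ) : R⟦X⟧) * h) = (k : R) * coeff n h := by
  have : ((k : ℕ) : R⟦X⟧) = C (k : R) := by push_cast; rfl
  rw [this, coeff_C_mul]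

lemma aux_dagger {P Q : R⟦X⟧} (hPQ : P * Q = 1) (m : ℕ) :
    X * d⁄dX R (Q ^ (m + 1)) - ((m : R⟦X⟧) + 1) * Q ^ (m + 1)
      = -((m : R⟦X⟧) + 1) * Q ^ (m + 2) * d⁄dX R (X * P) := by
  have h1 : P * d⁄dX R Q + Q * d⁄dX R P = 0 := by
    have := congrArg (d⁄dX R) hPQ
    rw [Derivation.leibniz] at this
    simpa [smul_eq_mul, mul_comm, add_comm] using this
  have hpow : d⁄dX R (Q ^ (m + 1)) = ((m : R⟦X⟧) + 1) * Q ^ m * d⁄dX R Q := by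
    rw [Derivation.leibniz_pow]
    simp [smul_eq_mul]
    ring
  have hXP : d⁄dX R (X * P) = P + X * d⁄dX R P := by
    rw [Derivation.leibniz]
    simp [smul_eq_mul]
    ring
  rw [hpow, hXP]
  linear_combination (((m : R⟦X⟧) + 1) * Q ^ (m + 1) - ((m : R⟦X⟧)+1) * X * Q ^ m * d⁄dX R Q) * hPQ + ((m : R⟦X⟧)+1) * X * Q ^ (m+1) * h1

lemma aux_L2 [Algebra ℚ R] {P Q : R⟦X⟧} (hPQ : P * Q = 1) (m : ℕ) :
    coeff (m + 1) (d⁄dX R (X * P) * Q ^ (m + 2)) = 0 := by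
  have hd := congrArg (coeff (m + 1)) (aux_dagger hPQ m)
  have hc : ((m : R⟦X⟧) + 1) = ((m + 1 : ℕ) : R⟦X⟧) := by push_cast; ring
  rw [map_sub, coeff_succ_X_mul, coeff_derivative, hc, aux_coeff_natCast_mul,
    show -((m + 1 : ℕ) : R⟦X⟧) * Q ^ (m + 2) * d⁄dX R (X * P)
        = ((m + 1 : ℕ) : R⟦X⟧) * (-(d⁄dX R (X * P) * Q ^ (m + 2))) by push_cast; ring,
    aux_coeff_natCast_mul, map_neg] at hd
  have h0 : ((m + 1 : ℕ) : R) * (-(coeff (m + 1) (d⁄dX R (X * P) * Q ^ (m + 2)))) = 0 := by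
    rw [← hd]; push_cast; ring
  have := aux_cancel (Nat.succ_pos m) h0
  simpa [neg_eq_zero] using this

lemma aux_Eq1 {P Q : R⟦X⟧} (hPQ : P * Q = 1) (k : ℕ) :
    coeff (k + 1) (Q ^ (k + 2)) =
      ((k + 2 : ℕ) : R) * coeff (k + 1) (d⁄dX R (X * P) * Q ^ (k + 3)) := by
  have hd := congrArg (coeff (k + 1)) (aux_dagger hPQ (k + 1))
  have hc : (((k + 1 : ℕ) : R⟦X⟧) + 1) = ((k + 2 : ℕ) : R⟦X⟧) := by push_cast; ring
  rw [map_sub, coeff_succ_X_mul, coeff_derivative, hc, aux_coeff_natCast_mul,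
    show -((k + 2 : ℕ) : R⟦X⟧) * Q ^ (k + 1 + 2) * d⁄dX R (X * P)
        = ((k + 2 : ℕ) : R⟦X⟧) * (-(d⁄dX R (X * P) * Q ^ (k + 3))) by push_cast; ring,
    aux_coeff_natCast_mul, map_neg] at hd
  push_cast at hd ⊢
  linear_combination -hd

lemma coeff_psComp (g f : R⟦X⟧) (k : ℕ) :
    coeff k (psComp g f) =
      ∑ t ∈ Finset.range (k + 1), coeff t g * coeff k (f ^ t) := by
  rw [psComp, coeff_mk]

lemma aux_U (P g : R⟦X⟧) (hg0 : constantCoeff g = 0)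
    (hgf : psComp g (X * P) = X) (k : ℕ) {j : ℕ} (hj : j ≤ k + 1) :
    coeff j (∑ i ∈ Finset.range (k + 2), C (coeff (i + 1) g) * (X ^ i * P ^ (i + 1)))
      = if j = 0 then 1 else 0 := by
  have hXU : X * (∑ i ∈ Finset.range (k + 2), C (coeff (i + 1) g) * (X ^ i * P ^ (i + 1)))
      = ∑ i ∈ Finset.range (k + 2), C (coeff (i + 1) g) * (X * P) ^ (i + 1) := by
    rw [Finset.mul_sum]
    refine Finset.sum_congr rfl fun i _ => ?_
    rw [mul_pow, pow_succ, pow_succ]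
    ring
  have h2 := congrArg (coeff (j + 1)) hgf
  rw [coeff_psComp] at h2
  have h3 : ∑ t ∈ Finset.range (j + 2), coeff t g * coeff (j + 1) ((X * P) ^ t)
      = ∑ i ∈ Finset.range (k + 2), coeff (i + 1) g * coeff (j + 1) ((X * P) ^ (i + 1)) := by
    rw [Finset.sum_range_succ']
    have hb0 : coeff 0 g = 0 := by rw [coeff_zero_eq_constantCoeff]; exact hg0
    rw [hb0, zero_mul, add_zero]
    refine Finset.sum_subset (Finset.range_subset_range.2 (by omega)) ?_
    intro i _ hi
    rw [Finset.mem_range, not_lt] at hi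
    rw [mul_pow, aux_coeff_X_pow_mul_of_lt _ (by omega), mul_zero]
  rw [← coeff_succ_X_mul, hXU]
  rw [h3] at h2
  rw [show (∑ i ∈ Finset.range (k + 2), coeff (i+1) g * coeff (j+1) ((X*P)^(i+1)))
      = coeff (j+1) (∑ i ∈ Finset.range (k + 2), C (coeff (i+1) g) * ((X*P)^(i+1))) by
    rw [map_sum]; exact Finset.sum_congr rfl fun i _ => (coeff_C_mul _ _ _).symm] at h2
  rw [h2, coeff_X]
  simp only [Nat.add_eq_right]

lemma aux_main1 [Algebra ℚ R] (P Q g : R⟦X⟧) (k : ℕ) (hPQ : P * Q = 1)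
    (hP0 : constantCoeff P = 1)
    (hL2 : ∀ m : ℕ, coeff (m + 1) (d⁄dX R (X * P) * Q ^ (m + 2)) = 0)
    (hUc : ∀ j ≤ k + 1, coeff j (∑ i ∈ Finset.range (k + 2),
        C (coeff (i + 1) g) * (X ^ i * P ^ (i + 1))) = if j = 0 then 1 else 0) :
    coeff (k + 1) (d⁄dX R (X * P) * Q ^ (k + 3)) = coeff (k + 2) g := by
  set W : R⟦X⟧ := d⁄dX R (X * P) * Q ^ (k + 3) with hW
  set U : R⟦X⟧ := ∑ i ∈ Finset.range (k + 2), C (coeff (i + 1) g) * (X ^ i * P ^ (i + 1))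
    with hUdef
  have hQ0 : constantCoeff Q = 1 := by
    have := congrArg (constantCoeff) hPQ
    rw [map_mul, hP0, one_mul, map_one] at this
    exact this
  have hD0 : constantCoeff (d⁄dX R (X * P)) = 1 := by
    rw [← coeff_zero_eq_constantCoeff_apply, coeff_derivative, coeff_succ_X_mul,
      coeff_zero_eq_constantCoeff_apply, hP0]
    ring
  have step1 : coeff (k + 1) (U * W) = coeff (k + 1) W := by
    rw [coeff_mul, Finset.sum_eq_single ((0 : ℕ), k + 1)]
    · rw [hUc 0 (by omega)]
      simp
    · rintro ⟨a, b⟩ hab hne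
      rw [Finset.HasAntidiagonal.mem_antidiagonal] at hab
      have ha : a ≠ 0 := fun h => hne (by simp_all)
      rw [hUc a (by omega), if_neg ha, zero_mul]
    · intro h
      exact absurd (Finset.HasAntidiagonal.mem_antidiagonal.2 (by simp)) h
  have step2 : coeff (k + 1) (U * W) = coeff (k + 2) g := by
    rw [hUdef, Finset.sum_mul, map_sum]
    have hterm : ∀ i ∈ Finset.range (k + 2),
        coeff (k + 1) (C (coeff (i + 1) g) * (X ^ i * P ^ (i + 1)) * W)
          = if i = k + 1 then coeff (k + 2) g else 0 := by
      intro i hi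
      rw [Finset.mem_range] at hi
      rcases eq_or_ne i (k + 1) with rfl | hne
      · rw [if_pos rfl]
        have hpq : P ^ (k + 2) * Q ^ (k + 3) = Q := by
          have h' : P ^ (k + 2) * Q ^ (k + 3) = (P * Q) ^ (k + 2) * Q := by ring
          rw [h', hPQ, one_pow, one_mul]
        have hrw : C (coeff (k + 2) g) * (X ^ (k + 1) * P ^ (k + 2)) * W
            = C (coeff (k + 2) g) * (X ^ (k + 1) * (d⁄dX R (X * P) * (P ^ (k + 2) * Q ^ (k + 3)))) := by
          rw [hW]; ring
        rw [hpq] at hrw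
        have hx := coeff_X_pow_mul (d⁄dX R (X * P) * Q) (k + 1) 0
        rw [zero_add] at hx
        rw [hrw, coeff_C_mul, hx, coeff_zero_eq_constantCoeff_apply, map_mul, hD0, hQ0]
        ring
      · rw [if_neg hne]
        obtain ⟨m, hm⟩ : ∃ m, k = i + m := ⟨k - i, by omega⟩
        subst hm
        have hpq : P ^ (i + 1) * Q ^ (i + m + 3) = Q ^ (m + 2) := by
          have h' : P ^ (i + 1) * Q ^ (i + m + 3) = (P * Q) ^ (i + 1) * Q ^ (m + 2) := by ring
          rw [h', hPQ, one_pow, one_mul]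
        have hrw : C (coeff (i + 1) g) * (X ^ i * P ^ (i + 1)) * W
            = C (coeff (i + 1) g) * (X ^ i * (d⁄dX R (X * P) * (P ^ (i + 1) * Q ^ (i + m + 3)))) := by
          rw [hW]; ring
        rw [hpq] at hrw
        have hx := coeff_X_pow_mul (d⁄dX R (X * P) * Q ^ (m + 2)) i (m + 1)
        rw [show m + 1 + i = i + m + 1 by omega] at hx
        rw [hrw, coeff_C_mul, hx, hL2 m, mul_zero]
    rw [Finset.sum_congr rfl hterm]
    simp
  rw [← step1, step2]

lemma aux_V (u Q : R⟦X⟧) (k : ℕ) (hu0 : constantCoeff u = 0)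
    (hPQ : (1 + u) * Q = 1) :
    coeff (k + 1) (Q ^ (k + 2)) =
      coeff (k + 1) (∑ j ∈ Finset.range (k + 2),
        C (((k + 1 + j).choose (k + 1) : R)) * (-u) ^ j) := by
  classical
  set B' : Polynomial R := ∑ j ∈ Finset.range (k + 2),
    Polynomial.C (((k + 1 + j).choose (k + 1) : R)) * Polynomial.X ^ j with hB'
  set A' : Polynomial R := (1 - Polynomial.X) ^ (k + 2) with hA'
  have hAB := mk_add_choose_mul_one_sub_pow_eq_one (S := R) (d := k + 1)
  have hBlow : ∀ t, t < k + 2 → B'.coeff t = (((k + 1 + t).choose (k + 1) : R)) := by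
    intro t ht
    rw [hB', Polynomial.finset_sum_coeff]
    simp only [Polynomial.coeff_C_mul, Polynomial.coeff_X_pow, mul_ite, mul_one, mul_zero]
    rw [Finset.sum_ite_eq (Finset.range (k + 2)) t, if_pos (Finset.mem_range.2 ht)]
  have hA'coe : ((A' : Polynomial R) : R⟦X⟧) = (1 - X) ^ (k + 2) := by
    push_cast [hA']
    rfl
  have hdvd : (Polynomial.X : Polynomial R) ^ (k + 2) ∣ A' * B' - 1 := by
    rw [Polynomial.X_pow_dvd_iff]
    intro d hd
    have h1 := congrArg (coeff d) hAB
    rw [coeff_mul, coeff_one] at h1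
    rw [Polynomial.coeff_sub, Polynomial.coeff_one, mul_comm A' B', Polynomial.coeff_mul,
      sub_eq_zero, ← h1]
    refine Finset.sum_congr rfl fun p hp => ?_
    rw [Finset.HasAntidiagonal.mem_antidiagonal] at hp
    have hp1 : p.1 < k + 2 := by omega
    rw [hBlow p.1 hp1, coeff_mk]
    congr 1
    rw [← hA'coe, Polynomial.coeff_coe]
  obtain ⟨E, hE⟩ := hdvd
  set ψ : Polynomial R →+* R⟦X⟧ := Polynomial.eval₂RingHom C (-u) with hψ
  have hE' : A' * B' = 1 + Polynomial.X ^ (k + 2) * E := by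
    rw [← hE]; ring
  have hψX : ψ Polynomial.X = -u := Polynomial.eval₂_X _ _
  have hψA : ψ A' = (1 + u) ^ (k + 2) := by
    rw [hA', map_pow, map_sub, map_one, hψX]
    ring_nf
  have hψB : ψ B' = ∑ j ∈ Finset.range (k + 2),
      C (((k + 1 + j).choose (k + 1) : R)) * (-u) ^ j := by
    rw [hB', map_sum]
    refine Finset.sum_congr rfl fun j _ => ?_
    rw [map_mul, map_pow, hψX, hψ]
    rw [Polynomial.coe_eval₂RingHom, Polynomial.eval₂_C]
  have hEψ := congrArg ψ hE'
  rw [map_mul, map_add, map_one, hψA, hψB, map_mul, map_pow, hψX] at hEψ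
  set V : R⟦X⟧ := ∑ j ∈ Finset.range (k + 2),
    C (((k + 1 + j).choose (k + 1) : R)) * (-u) ^ j with hV
  have hQV : V = Q ^ (k + 2) + Q ^ (k + 2) * ((-u) ^ (k + 2) * ψ E) := by
    have h3 : Q ^ (k + 2) * (1 + u) ^ (k + 2) = 1 := by
      rw [← mul_pow, mul_comm Q (1 + u), hPQ, one_pow]
    have h2 : V = Q ^ (k + 2) * ((1 + u) ^ (k + 2) * V) := by
      rw [← mul_assoc, h3, one_mul]
    rw [h2, hEψ]
    ring
  have hzero : coeff (k + 1) (Q ^ (k + 2) * ((-u) ^ (k + 2) * ψ E)) = 0 := by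
    have hXu : (X : R⟦X⟧) ∣ -u := by
      rw [X_dvd_iff, map_neg, hu0, neg_zero]
    have : (X : R⟦X⟧) ^ (k + 2) ∣ Q ^ (k + 2) * ((-u) ^ (k + 2) * ψ E) :=
      Dvd.dvd.mul_left (Dvd.dvd.mul_right (pow_dvd_pow_of_dvd hXu _) _) _
    exact X_pow_dvd_iff.mp this (k + 1) (by omega)
  have hfin := congrArg (coeff (k + 1)) hQV
  rw [map_add, hzero, add_zero] at hfin
  rw [← hfin]

lemma aux_coeff_C_X_pow (r : R) (m s : ℕ) :
    coeff m (C r * X ^ s) = if m = s then r else 0 := by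
  rw [coeff_C_mul, coeff_X_pow]
  simp [mul_ite]

lemma aux_coeffV (aN aM : R) (e1 e2 k : ℕ) :
    coeff (k + 1) (∑ j ∈ Finset.range (k + 2),
        C (((k + 1 + j).choose (k + 1) : R)) * (-(C aN * X ^ e1 + C aM * X ^ e2)) ^ j)
      = ∑ j ∈ Finset.range (k + 2), ∑ c ∈ Finset.range (j + 1),
          if k + 1 = e1 * c + e2 * (j - c) then
            ((-1 : R) ^ j * (((k + 1 + j).choose (k + 1) : R)) * ((j.choose c : R))) *
              aN ^ c * aM ^ (j - c)
          else 0 := by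
  rw [map_sum]
  refine Finset.sum_congr rfl fun j _ => ?_
  rw [neg_pow, add_pow, Finset.mul_sum, Finset.mul_sum, map_sum]
  refine Finset.sum_congr rfl fun c _ => ?_
  have h1 : ((-1 : R⟦X⟧)) ^ j = C ((-1 : R) ^ j) := by
    rw [map_pow, map_neg, map_one]
  have h2 : ((j.choose c : ℕ) : R⟦X⟧) = C ((j.choose c : ℕ) : R) := by
    rw [← map_natCast C]
  have h3 : C (((k + 1 + j).choose (k + 1) : R)) *
        ((-1 : R⟦X⟧) ^ j * ((C aN * X ^ e1) ^ c * (C aM * X ^ e2) ^ (j - c) * ((j.choose c : ℕ) : R⟦X⟧)))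
      = C (((-1 : R) ^ j * (((k + 1 + j).choose (k + 1) : R)) * ((j.choose c : R))) *
          aN ^ c * aM ^ (j - c)) * X ^ (e1 * c + e2 * (j - c)) := by
    rw [h1, h2, mul_pow, mul_pow, ← map_pow, ← map_pow, ← pow_mul, ← pow_mul, pow_add]
    simp only [map_mul]
    ring
  rw [h3, aux_coeff_C_X_pow]

lemma aux_fact_prod (n j : ℕ) (hn : 1 ≤ n) :
    (n - 1).factorial * ∏ t ∈ Finset.range j, (n + t) = (n - 1 + j).factorial := by
  induction j with
  | zero => simp
  | succ j ih =>
      rw [Finset.prod_range_succ, ← mul_assoc, ih]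
      have h1 : n - 1 + (j + 1) = (n - 1 + j) + 1 := by omega
      rw [h1, Nat.factorial_succ]
      have h2 : n - 1 + j + 1 = n + j := by omega
      rw [h2, mul_comm]

lemma aux_combo (n j c : ℕ) (hc : c ≤ j) (hn : 1 ≤ n) :
    (-1 : ℚ) ^ j * (∏ t ∈ Finset.range j, ((n : ℚ) + t)) /
        ((c.factorial : ℚ) * ((j - c).factorial : ℚ))
      = (-1 : ℚ) ^ j * ((n - 1 + j).choose (n - 1) : ℚ) * (j.choose c : ℚ) := by
  have hprod : (∏ t ∈ Finset.range j, ((n : ℚ) + t))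
      = ((n - 1 + j).factorial : ℚ) / ((n - 1).factorial : ℚ) := by
    rw [eq_div_iff (by exact_mod_cast (n-1).factorial_pos.ne')]
    rw [mul_comm]
    exact_mod_cast congrArg (Nat.cast : ℕ → ℚ) (aux_fact_prod n j hn)
  have h1 : ((n - 1 + j).choose (n - 1) : ℚ)
      = ((n - 1 + j).factorial : ℚ) / (((n - 1).factorial : ℚ) * (j.factorial : ℚ)) := by
    rw [Nat.cast_choose ℚ (Nat.le_add_right _ _), Nat.add_sub_cancel_left]
  have h2 : (j.choose c : ℚ) = (j.factorial : ℚ) / ((c.factorial : ℚ) * ((j - c).factorial : ℚ)) := by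
    rw [Nat.cast_choose ℚ hc]
  rw [hprod, h1, h2]
  have f1 : ((n-1).factorial : ℚ) ≠ 0 := by exact_mod_cast (Nat.factorial_pos _).ne'
  have f2 : (j.factorial : ℚ) ≠ 0 := by exact_mod_cast (Nat.factorial_pos _).ne'
  have f3 : (c.factorial : ℚ) ≠ 0 := by exact_mod_cast (Nat.factorial_pos _).ne'
  have f4 : ((j-c).factorial : ℚ) ≠ 0 := by exact_mod_cast (Nat.factorial_pos _).ne'
  field_simp

lemma aux_reindex {R : Type*} [CommRing R] (H : ℕ → ℕ → R) (e1 e2 k : ℕ)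
    (he1 : 1 ≤ e1) (he2 : 1 ≤ e2) :
    ∑ j ∈ Finset.range (k + 2), ∑ c ∈ Finset.range (j + 1),
        (if k + 1 = e1 * c + e2 * (j - c) then H c (j - c) else 0)
      = ∑ cc ∈ (Finset.range (k + 2) ×ˢ Finset.range (k + 2)).filter
          (fun cc => cc.1 * e1 + cc.2 * e2 = k + 1), H cc.1 cc.2 := by
  classical
  rw [Finset.sum_sigma' (Finset.range (k + 2)) (fun j => Finset.range (j + 1))
    (fun j c => if k + 1 = e1 * c + e2 * (j - c) then H c (j - c) else 0)]
  rw [← Finset.sum_filter]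
  refine Finset.sum_nbij' (fun x => (x.2, x.1 - x.2)) (fun cc => ⟨cc.1 + cc.2, cc.1⟩) ?_ ?_ ?_ ?_ ?_
  · rintro ⟨j, c⟩ hx
    simp only [Finset.mem_filter, Finset.mem_sigma, Finset.mem_range] at hx
    obtain ⟨⟨hj, hc⟩, hcond⟩ := hx
    dsimp only
    rw [Finset.mem_filter, Finset.mem_product, Finset.mem_range, Finset.mem_range]
    refine ⟨⟨by omega, by omega⟩, ?_⟩
    rw [mul_comm, mul_comm (j - c) e2]
    exact hcond.symm
  · rintro ⟨c, c'⟩ hcc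
    simp only [Finset.mem_filter, Finset.mem_product, Finset.mem_range] at hcc
    obtain ⟨⟨hc, hc'⟩, hcond⟩ := hcc
    dsimp only
    rw [Finset.mem_filter, Finset.mem_sigma, Finset.mem_range, Finset.mem_range]
    have h1 : c ≤ c * e1 := Nat.le_mul_of_pos_right c (by omega)
    have h2 : c' ≤ c' * e2 := Nat.le_mul_of_pos_right c' (by omega)
    have h3 : c + c' ≤ k + 1 := by
      calc c + c' ≤ c * e1 + c' * e2 := Nat.add_le_add h1 h2
      _ = k + 1 := hcond
    have hA : c + c' < k + 2 := by omega
    have hB : c < c + c' + 1 := by omega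
    refine ⟨⟨hA, hB⟩, ?_⟩
    show k + 1 = e1 * c + e2 * (c + c' - c)
    rw [Nat.add_sub_cancel_left, mul_comm e1 c, mul_comm e2 c']
    exact hcond.symm
  · rintro ⟨j, c⟩ hx
    simp only [Finset.mem_filter, Finset.mem_sigma, Finset.mem_range] at hx
    have : c + (j - c) = j := by omega
    simp [this]
  · rintro ⟨c, c'⟩ _
    simp
  · rintro ⟨j, c⟩ _
    rfl

end Aux

/-- Lagrange inversion for `f(x) = x + a_N x^N + a_M x^M` with `2 ≤ N < M` over a
commutative `ℚ`-algebra: the compositional inverse `g(x) = Σ b_n x^n` satisfies, for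
`n > 1`, `b_n = (1/n) Σ_{c(N-1)+c'(M-1) = n-1} (-1)^{c+c'}
(n(n+1)⋯(n-1+c+c'))/(c! c'!) a_N^c a_M^{c'}` (in particular `b_n = 0` when `n - 1` has
no such representation, the sum then being empty). -/
theorem stmt_6 {R : Type*} [CommRing R] [Algebra ℚ R] (N M : ℕ)
    (hN : 2 ≤ N) (hNM : N < M) (aN aM : R) (f g : PowerSeries R)
    (hf : f = X + C aN * X ^ N + C aM * X ^ M)
    (hg0 : constantCoeff g = 0)
    (hgf : psComp g f = X) (hfg : psComp f g = X) :
    ∀ n : ℕ, 1 < n →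
      PowerSeries.coeff n g =
        algebraMap ℚ R (1 / (n : ℚ)) *
          ∑ cc ∈ (Finset.range n ×ˢ Finset.range n).filter
              (fun cc => cc.1 * (N - 1) + cc.2 * (M - 1) = n - 1),
            algebraMap ℚ R ((-1 : ℚ) ^ (cc.1 + cc.2) *
                (∏ t ∈ Finset.range (cc.1 + cc.2), ((n : ℚ) + t)) /
                  ((cc.1.factorial : ℚ) * (cc.2.factorial : ℚ))) *
              aN ^ cc.1 * aM ^ cc.2 := by
  obtain ⟨e1, rfl⟩ : ∃ e, N = e + 1 := ⟨N - 1, by omega⟩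
  obtain ⟨e2, rfl⟩ : ∃ e, M = e + 1 := ⟨M - 1, by omega⟩
  have he1 : 1 ≤ e1 := by omega
  have he2 : 1 ≤ e2 := by omega
  intro n hn
  obtain ⟨k, rfl⟩ : ∃ k, n = k + 2 := ⟨n - 2, by omega⟩
  simp only [Nat.add_sub_cancel]
  -- set up P, Q
  set u : R⟦X⟧ := C aN * X ^ e1 + C aM * X ^ e2 with hu
  have hu0 : constantCoeff u = 0 := by
    rw [hu]
    simp only [map_add, map_mul, constantCoeff_C, map_pow, constantCoeff_X,
      zero_pow (show e1 ≠ 0 by omega), zero_pow (show e2 ≠ 0 by omega), mul_zero, add_zero]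
  have hfP : f = X * (1 + u) := by
    rw [hf, hu, pow_succ, pow_succ]
    ring
  have hP0 : constantCoeff (1 + u) = 1 := by
    rw [map_add, map_one, hu0, add_zero]
  set Q : R⟦X⟧ := invOfUnit (1 + u) 1 with hQ
  have hPQ : (1 + u) * Q = 1 := mul_invOfUnit (1 + u) 1 (by rw [hP0]; rfl)
  -- first half: (k+2) * b_{k+2} = coeff (k+1) (Q^(k+2))
  have hgf' : psComp g (X * (1 + u)) = X := by rw [← hfP]; exact hgf
  have hmain1 : coeff (k + 1) (d⁄dX R (X * (1 + u)) * Q ^ (k + 3)) = coeff (k + 2) g :=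
    aux_main1 (1 + u) Q g k hPQ hP0 (fun m => aux_L2 hPQ m)
      (fun j hj => aux_U (1 + u) g hg0 hgf' k hj)
  have hEq1 := aux_Eq1 hPQ k
  rw [hmain1] at hEq1
  have hb : coeff (k + 2) g = algebraMap ℚ R (1 / ((k + 2 : ℕ) : ℚ)) *
      coeff (k + 1) (Q ^ (k + 2)) :=
    aux_cancel (by omega) hEq1.symm
  rw [hb]
  push_cast
  congr 1
  -- second half : coefficient of Q^(k+2)
  rw [aux_V u Q k hu0 hPQ, hu, aux_coeffV aN aM e1 e2 k]
  have hbody : ∀ j ∈ Finset.range (k + 2), ∀ c ∈ Finset.range (j + 1),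
      (if k + 1 = e1 * c + e2 * (j - c) then
          ((-1 : R) ^ j * (((k + 1 + j).choose (k + 1) : R)) * ((j.choose c : R))) *
            aN ^ c * aM ^ (j - c)
        else 0)
      = (if k + 1 = e1 * c + e2 * (j - c) then
          algebraMap ℚ R ((-1 : ℚ) ^ (c + (j - c)) *
              (∏ t ∈ Finset.range (c + (j - c)), (((k + 2 : ℕ) : ℚ) + t)) /
                ((c.factorial : ℚ) * ((j - c).factorial : ℚ))) *
            aN ^ c * aM ^ (j - c)
        else 0) := by
    intro j hj c hc
    rw [Finset.mem_range] at hj hc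
    have hcj : c ≤ j := by omega
    have hsum : c + (j - c) = j := by omega
    rw [hsum]
    by_cases hcond : k + 1 = e1 * c + e2 * (j - c)
    · rw [if_pos hcond, if_pos hcond]
      have hcombo := aux_combo (k + 2) j c hcj (by omega)
      rw [show k + 2 - 1 = k + 1 from rfl] at hcombo
      rw [hcombo]
      simp only [map_mul, map_pow, map_neg, map_one, map_natCast]
    · rw [if_neg hcond, if_neg hcond]
  rw [Finset.sum_congr rfl (fun j hj => Finset.sum_congr rfl (fun c hc => hbody j hj c hc))]
  rw [aux_reindex (fun c c' => algebraMap ℚ R ((-1 : ℚ) ^ (c + c') *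
      (∏ t ∈ Finset.range (c + c'), (((k + 2 : ℕ) : ℚ) + t)) /
        ((c.factorial : ℚ) * (c'.factorial : ℚ))) * aN ^ c * aM ^ c') e1 e2 k he1 he2]
  push_cast
  rfl
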